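/- Let A be a real symmetric copositive matrix of order n (n ≥ 2) such that some principal submatrix of A of order n−1 is positive semidefinite. Then A is SPN. -/

import Mathlib

open Matrix

/-- A real symmetric matrix `A` is *copositive* if `xᵀAx ≥ 0` for every
entrywise nonnegative vector `x`. -/
def Copositive {ι : Type*} [Fintype ι] (A : Matrix ι ι ℝ) : Prop :=
  ∀ x : ι → ℝ, (∀ i, 0 ≤ x i) → 0 ≤ x ⬝ᵥ A.mulVec x

/-- A real symmetric matrix is *SPN* if it is the sum of a positive semidefinite
matrix and a symmetric entrywise nonnegative matrix. -/
def IsSPN {ι : Type*} [Fintype ι] (A : Matrix ι ι ℝ) : Prop :=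
  ∃ P N : Matrix ι ι ℝ, P.PosSemidef ∧ N.IsSymm ∧ (∀ i j, 0 ≤ N i j) ∧ A = P + N

open Filter Topology


private lemma quad_continuous {ι : Type*} [Fintype ι] (D : Matrix ι ι ℝ) (b : ι → ℝ) :
    Continuous fun x : ι → ℝ => x ⬝ᵥ D.mulVec x + 2 * (b ⬝ᵥ x) := by
  simp only [dotProduct, mulVec]
  refine ((continuous_finset_sum _ fun i _ => (continuous_apply i).mul
    (continuous_finset_sum _ fun j _ => continuous_const.mul (continuous_apply j))).add
    (continuous_const.mul (continuous_finset_sum _ fun i _ =>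
      continuous_const.mul (continuous_apply i))))

private lemma exists_min_orthant {ι : Type*} [Fintype ι] (D : Matrix ι ι ℝ) (b : ι → ℝ)
    (ε : ℝ) (hε : 0 < ε) (hcoer : ∀ x : ι → ℝ, ε * (x ⬝ᵥ x) ≤ x ⬝ᵥ D.mulVec x) :
    ∃ z : ι → ℝ, (∀ i, 0 ≤ z i) ∧ ∀ x : ι → ℝ, (∀ i, 0 ≤ x i) →
      z ⬝ᵥ D.mulVec z + 2 * (b ⬝ᵥ z) ≤ x ⬝ᵥ D.mulVec x + 2 * (b ⬝ᵥ x) := by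
  set q : (ι → ℝ) → ℝ := fun x => x ⬝ᵥ D.mulVec x + 2 * (b ⬝ᵥ x) with hq
  have hcont : Continuous q := quad_continuous D b
  have hq0 : q 0 = 0 := by simp [hq]
  set K : Set (ι → ℝ) := {x | (∀ i, 0 ≤ x i) ∧ q x ≤ 0} with hK
  have h0K : (0 : ι → ℝ) ∈ K := ⟨fun i => le_refl 0, by simp [hq0]⟩
  have hclosed : IsClosed K := by
    have he : {x : ι → ℝ | ∀ i, 0 ≤ x i} = ⋂ i, {x : ι → ℝ | 0 ≤ x i} := by
      ext x; simp [Set.mem_iInter]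
    have h1 : IsClosed {x : ι → ℝ | ∀ i, 0 ≤ x i} := by
      rw [he]
      exact isClosed_iInter fun i => isClosed_le continuous_const (continuous_apply i)
    have h2 : IsClosed {x : ι → ℝ | q x ≤ 0} := isClosed_le hcont continuous_const
    exact h1.inter h2
  -- boundedness
  set C2 : ℝ := ∑ i, (b i)^2 with hC2
  have hC2nn : 0 ≤ C2 := Finset.sum_nonneg fun i _ => sq_nonneg _
  have hbound : ∀ x ∈ K, ‖x‖ ≤ max 1 (4 * C2 / ε ^ 2) := by
    intro x hx
    have hxq : q x ≤ 0 := hx.2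
    have ht : ε * (x ⬝ᵥ x) ≤ 2 * (-(b ⬝ᵥ x)) := by
      have := hcoer x
      simp only [hq] at hxq
      linarith
    have hcs : (b ⬝ᵥ x)^2 ≤ C2 * (x ⬝ᵥ x) := by
      have h := Finset.sum_mul_sq_le_sq_mul_sq Finset.univ b x
      have hxe : x ⬝ᵥ x = ∑ i, (x i)^2 := by simp [dotProduct, sq]
      rw [hxe]
      simpa [dotProduct, hC2] using h
    have hxx : 0 ≤ x ⬝ᵥ x := by
      simp only [dotProduct]
      exact Finset.sum_nonneg fun i _ => mul_self_nonneg _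
    have hT : x ⬝ᵥ x ≤ 4 * C2 / ε ^ 2 := by
      rcases eq_or_lt_of_le hxx with h | h
      · rw [← h]; positivity
      · rw [le_div_iff₀ (by positivity)]
        have h1 : 0 < ε * (x ⬝ᵥ x) := mul_pos hε h
        have h2 := mul_self_le_mul_self (le_of_lt h1) ht
        nlinarith
    rw [pi_norm_le_iff_of_nonneg (le_trans zero_le_one (le_max_left _ _))]
    intro i
    rw [Real.norm_eq_abs]
    have hxi2 : (x i)^2 ≤ 4 * C2 / ε ^ 2 := by
      refine le_trans ?_ hT
      simp only [dotProduct, pow_two]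
      exact Finset.single_le_sum (fun j _ => mul_self_nonneg (x j)) (Finset.mem_univ i)
    rcases le_or_gt |x i| 1 with h | h
    · exact le_trans h (le_max_left _ _)
    · refine le_trans ?_ (le_max_right _ _)
      nlinarith [sq_abs (x i), abs_nonneg (x i)]
  have hKb : Bornology.IsBounded K := by
    refine (Metric.isBounded_iff_subset_closedBall 0).mpr ⟨max 1 (4 * C2 / ε ^ 2), fun x hx => ?_⟩
    simpa [Metric.mem_closedBall, dist_zero_right] using hbound x hx
  have hKcomp : IsCompact K := Metric.isCompact_of_isClosed_isBounded hclosed hKb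
  obtain ⟨z, hzK, hzmin⟩ := hKcomp.exists_isMinOn ⟨0, h0K⟩ hcont.continuousOn
  refine ⟨z, hzK.1, fun x hxnn => ?_⟩
  show q z ≤ q x
  rcases le_or_gt (q x) 0 with h | h
  · exact hzmin ⟨hxnn, h⟩
  · have h1 : q z ≤ q 0 := hzmin h0K
    rw [hq0] at h1
    linarith

private lemma symm_swap {ι : Type*} [Fintype ι] {D : Matrix ι ι ℝ} (hD : D.IsSymm)
    (y z : ι → ℝ) : y ⬝ᵥ D.mulVec z = z ⬝ᵥ D.mulVec y := by
  simp only [dotProduct, mulVec, Finset.mul_sum]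
  rw [Finset.sum_comm]
  refine Finset.sum_congr rfl fun i _ => Finset.sum_congr rfl fun j _ => ?_
  rw [show D j i = D i j from hD.apply i j]
  ring

private lemma quad_expand {ι : Type*} [Fintype ι] (D : Matrix ι ι ℝ) (hD : D.IsSymm)
    (z y : ι → ℝ) :
    (z + y) ⬝ᵥ D.mulVec (z + y)
      = z ⬝ᵥ D.mulVec z + 2 * (y ⬝ᵥ D.mulVec z) + y ⬝ᵥ D.mulVec y := by
  simp only [mulVec_add, dotProduct_add, add_dotProduct]
  rw [symm_swap hD z y]
  ring

private lemma eps_step {ι : Type*} [Fintype ι] [DecidableEq ι]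
    (B : Matrix ι ι ℝ) (hBs : B.IsSymm) (hB : ∀ x : ι → ℝ, 0 ≤ x ⬝ᵥ B.mulVec x)
    (b : ι → ℝ) (α : ℝ) (hα : 0 ≤ α)
    (h : ∀ x : ι → ℝ, (∀ i, 0 ≤ x i) → 0 ≤ x ⬝ᵥ B.mulVec x + 2 * (b ⬝ᵥ x) + α)
    (ε : ℝ) (hε : 0 < ε) :
    ∃ c : ι → ℝ, (∀ i, c i ≤ b i) ∧ (∀ i, (c i)^2 ≤ (B i i + ε) * α) ∧
      ∀ (x : ι → ℝ) (t : ℝ),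
        0 ≤ x ⬝ᵥ B.mulVec x + ε * (x ⬝ᵥ x) + 2 * (t * (c ⬝ᵥ x)) + t^2 * α := by
  set D : Matrix ι ι ℝ := B + ε • (1 : Matrix ι ι ℝ) with hDdef
  have hDs : D.IsSymm := by
    rw [hDdef]
    exact hBs.add ((Matrix.isSymm_one).smul ε)
  have hDmul : ∀ x : ι → ℝ, D.mulVec x = B.mulVec x + ε • x := by
    intro x
    rw [hDdef, add_mulVec, smul_mulVec, one_mulVec]
  have hDquad : ∀ x y : ι → ℝ, x ⬝ᵥ D.mulVec y = x ⬝ᵥ B.mulVec y + ε * (x ⬝ᵥ y) := by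
    intro x y
    rw [hDmul, dotProduct_add, dotProduct_smul, smul_eq_mul]
  have hDii : ∀ i, D i i = B i i + ε := by
    intro i
    simp [hDdef, Matrix.one_apply_eq]
  have hBii : ∀ i, 0 ≤ B i i := by
    intro i
    have := hB (Pi.single i 1)
    simpa [dotProduct_single, single_dotProduct, mulVec_single] using this
  have hcoer : ∀ x : ι → ℝ, ε * (x ⬝ᵥ x) ≤ x ⬝ᵥ D.mulVec x := by
    intro x
    rw [hDquad]
    nlinarith [hB x]
  have hdotnn : ∀ x : ι → ℝ, 0 ≤ x ⬝ᵥ x :=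
    fun x => Finset.sum_nonneg fun i _ => mul_self_nonneg _
  have hDpsd : ∀ x : ι → ℝ, 0 ≤ x ⬝ᵥ D.mulVec x := by
    intro x
    exact le_trans (mul_nonneg hε.le (hdotnn x)) (hcoer x)
  obtain ⟨z, hznn, hzmin⟩ := exists_min_orthant D b ε hε hcoer
  set lam : ι → ℝ := fun i => D.mulVec z i + b i with hlam
  -- perturbation inequality
  have hpert : ∀ (i : ι) (s : ℝ), 0 ≤ z i + s →
      0 ≤ s^2 * D i i + 2 * (s * lam i) := by
    intro i s hs
    have hmem : ∀ j, 0 ≤ z j + (Pi.single i s : ι → ℝ) j := by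
      intro j
      rcases eq_or_ne j i with rfl | hne
      · simpa using hs
      · simpa [Pi.single_apply, hne] using hznn j
    have hmin := hzmin (z + Pi.single i s) (fun j => by simpa using hmem j)
    rw [quad_expand D hDs z (Pi.single i s)] at hmin
    have e1 : Pi.single i s ⬝ᵥ D.mulVec z = s * D.mulVec z i := single_dotProduct _ s i
    have e2 : Pi.single i s ⬝ᵥ D.mulVec (Pi.single i s) = s^2 * D i i := by
      rw [mulVec_single, single_dotProduct]
      show s * (D i i * s) = s^2 * D i i
      ring
    have e3 : b ⬝ᵥ (z + Pi.single i s) = b ⬝ᵥ z + b i * s := by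
      rw [dotProduct_add, dotProduct_single]
    rw [e1, e2, e3] at hmin
    simp only [hlam]
    nlinarith [hmin]
  have hDiipos : ∀ i, 0 < D i i := by
    intro i; rw [hDii]; have := hBii i; linarith
  -- KKT: lam ≥ 0
  have hlamnn : ∀ i, 0 ≤ lam i := by
    intro i
    by_contra hneg
    push_neg at hneg
    have hd := hDiipos i
    have hspos : 0 < -(lam i) / D i i := div_pos (by linarith) hd
    have hs : (0:ℝ) ≤ z i + (-(lam i) / D i i) := by
      have := hznn i; linarith
    have hp := hpert i (-(lam i) / D i i) hs
    have hsd : (-(lam i) / D i i) * D i i = -(lam i) := by field_simp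
    have h3 : (-(lam i) / D i i)^2 * D i i = (-(lam i) / D i i) * -(lam i) := by
      rw [sq, mul_assoc, hsd]
    rw [h3] at hp
    nlinarith [mul_pos hspos (by linarith : (0:ℝ) < -(lam i))]
  -- complementarity
  have hcomp : ∀ i, lam i * z i = 0 := by
    intro i
    rcases eq_or_lt_of_le (hznn i) with hz0 | hzpos
    · rw [← hz0]; ring
    rcases eq_or_lt_of_le (hlamnn i) with hl0 | hlpos
    · rw [← hl0]; ring
    exfalso
    have hd := hDiipos i
    set m : ℝ := min (z i) (lam i / D i i) with hm
    have hmpos : 0 < m := lt_min hzpos (div_pos hlpos hd)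
    have hmz : m ≤ z i := min_le_left _ _
    have hmd : m * D i i ≤ lam i := by
      have h1 : m ≤ lam i / D i i := min_le_right _ _
      calc m * D i i ≤ (lam i / D i i) * D i i := by nlinarith
        _ = lam i := by field_simp
    have hp := hpert i (-m) (by linarith)
    nlinarith [mul_pos hmpos hlpos, mul_pos hmpos (mul_pos hmpos hd)]
  -- b ⬝ᵥ z
  have hlamz : lam ⬝ᵥ z = 0 := by
    simp only [dotProduct]
    exact Finset.sum_eq_zero fun i _ => hcomp i
  have hbz : b ⬝ᵥ z = -(z ⬝ᵥ D.mulVec z) := by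
    have hbe : b = fun i => lam i - D.mulVec z i := by
      funext i; simp [hlam]
    rw [hbe]
    have : (fun i => lam i - D.mulVec z i) ⬝ᵥ z = lam ⬝ᵥ z - (D.mulVec z) ⬝ᵥ z :=
      sub_dotProduct _ _ _
    rw [this, hlamz, dotProduct_comm]
    ring
  have hzDz : z ⬝ᵥ D.mulVec z ≤ α := by
    have h1 := h z hznn
    have h2 := hDquad z z
    have h3 := hdotnn z
    nlinarith [hbz]
  -- define c
  have hquad : ∀ (x : ι → ℝ) (t : ℝ),
      0 ≤ x ⬝ᵥ B.mulVec x + ε * (x ⬝ᵥ x) + 2 * (t * ((fun i => b i - lam i) ⬝ᵥ x)) + t^2 * α := by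
    intro x t
    have hce : (fun i => b i - lam i) ⬝ᵥ x = -(z ⬝ᵥ D.mulVec x) := by
      have hbe : (fun i => b i - lam i) = fun i => -(D.mulVec z i) := by
        funext i; simp [hlam]
      rw [hbe]
      have h1 : (fun i => -(D.mulVec z i)) ⬝ᵥ x = -((D.mulVec z) ⬝ᵥ x) := neg_dotProduct _ _
      rw [h1, dotProduct_comm, symm_swap hDs x z]
    have hexp := quad_expand D hDs x (-(t • z))
    have e1 : (-(t • z)) ⬝ᵥ D.mulVec x = -(t * (z ⬝ᵥ D.mulVec x)) := by
      rw [neg_dotProduct, smul_dotProduct, smul_eq_mul]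
    have e2 : (-(t • z)) ⬝ᵥ D.mulVec (-(t • z)) = t^2 * (z ⬝ᵥ D.mulVec z) := by
      rw [mulVec_neg, dotProduct_neg, neg_dotProduct, neg_neg, mulVec_smul,
        dotProduct_smul, smul_dotProduct, smul_eq_mul, smul_eq_mul, sq]
      ring
    rw [e1, e2] at hexp
    have hpsd := hDpsd (x + -(t • z))
    rw [hexp] at hpsd
    have hq := hDquad x x
    rw [hce]
    nlinarith [sq_nonneg t, mul_nonneg (sq_nonneg t) (sub_nonneg.mpr hzDz)]
  refine ⟨fun i => b i - lam i, fun i => by have := hlamnn i; simp; linarith, ?_, hquad⟩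
  intro i
  show (b i - lam i)^2 ≤ (B i i + ε) * α
  have hsing : ∀ t : ℝ, 0 ≤ (B i i + ε) + 2 * (t * (b i - lam i)) + t^2 * α := by
    intro t
    have hq := hquad (Pi.single i 1) t
    have e1 : Pi.single i 1 ⬝ᵥ B.mulVec (Pi.single i 1) = B i i := by
      rw [mulVec_single, single_dotProduct]
      simp
    have e2 : (Pi.single i 1 : ι → ℝ) ⬝ᵥ Pi.single i 1 = 1 := by
      rw [dotProduct_single]
      simp
    have e3 : (fun j => b j - lam j) ⬝ᵥ Pi.single i 1 = b i - lam i := by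
      rw [dotProduct_single, mul_one]
    rw [e1, e2, e3, mul_one] at hq
    linarith
  set ci : ℝ := b i - lam i with hci
  have hd : 0 < B i i + ε := by have := hBii i; linarith
  rcases eq_or_lt_of_le hα with hα0 | hαpos
  · have hc0 : ci = 0 := by
      by_contra hc
      have ht := hsing (-(B i i + ε + 1)/(2 * ci))
      rw [← hα0] at ht
      have e : 2 * ((-(B i i + ε + 1)/(2 * ci)) * ci) = -(B i i + ε + 1) := by
        field_simp
      rw [e] at ht
      simp at ht
      linarith
    rw [hc0, ← hα0]
    simp
  · have ht := hsing (-ci/α)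
    have e : (B i i + ε) + 2 * ((-ci/α) * ci) + (-ci/α)^2 * α = (B i i + ε) - ci^2/α := by
      field_simp
      ring
    rw [e] at ht
    have h2 : ci^2/α ≤ B i i + ε := by linarith
    rw [div_le_iff₀ hαpos] at h2
    linarith

private lemma core {ι : Type*} [Fintype ι] [DecidableEq ι]
    (B : Matrix ι ι ℝ) (hBs : B.IsSymm) (hB : ∀ x : ι → ℝ, 0 ≤ x ⬝ᵥ B.mulVec x)
    (b : ι → ℝ) (α : ℝ) (hα : 0 ≤ α)
    (h : ∀ x : ι → ℝ, (∀ i, 0 ≤ x i) → 0 ≤ x ⬝ᵥ B.mulVec x + 2 * (b ⬝ᵥ x) + α) :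
    ∃ c : ι → ℝ, (∀ i, c i ≤ b i) ∧ ∀ (x : ι → ℝ) (t : ℝ),
      0 ≤ x ⬝ᵥ B.mulVec x + 2 * (t * (c ⬝ᵥ x)) + t^2 * α := by
  set ε : ℕ → ℝ := fun k => 1 / (k + 1) with hεdef
  have hεpos : ∀ k, 0 < ε k := fun k => by positivity
  have hεle1 : ∀ k, ε k ≤ 1 := by
    intro k
    rw [hεdef]
    rw [div_le_one (by positivity)]
    have : (0:ℝ) ≤ k := Nat.cast_nonneg k
    linarith
  have hchoice : ∀ k : ℕ, ∃ c : ι → ℝ, (∀ i, c i ≤ b i) ∧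
      (∀ i, (c i)^2 ≤ (B i i + ε k) * α) ∧
      ∀ (x : ι → ℝ) (t : ℝ),
        0 ≤ x ⬝ᵥ B.mulVec x + ε k * (x ⬝ᵥ x) + 2 * (t * (c ⬝ᵥ x)) + t^2 * α :=
    fun k => eps_step B hBs hB b α hα h (ε k) (hεpos k)
  choose cs hcs1 hcs2 hcs3 using hchoice
  set R : ι → ℝ := fun i => Real.sqrt ((B i i + 1) * α) with hR
  have hBiinn : ∀ i, 0 ≤ B i i := by
    intro i
    have := hB (Pi.single i 1)
    simpa [dotProduct_single, single_dotProduct, mulVec_single] using this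
  have hmem : ∀ k, cs k ∈ Set.pi Set.univ (fun i => Set.Icc (-(R i)) (R i)) := by
    intro k
    rw [Set.mem_univ_pi]
    intro i
    rw [Set.mem_Icc, ← abs_le, ← Real.sqrt_sq_eq_abs]
    refine Real.sqrt_le_sqrt ?_
    refine le_trans (hcs2 k i) ?_
    have := hεle1 k
    nlinarith [hBiinn i, hεpos k]
  have hScomp : IsCompact (Set.pi Set.univ (fun i => Set.Icc (-(R i)) (R i))) :=
    isCompact_univ_pi fun i => isCompact_Icc
  obtain ⟨c, hcS, φ, hφ, hconv⟩ := hScomp.tendsto_subseq hmem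
  have hconv' : ∀ i, Tendsto (fun k => cs (φ k) i) atTop (𝓝 (c i)) := by
    intro i
    exact (tendsto_pi_nhds.mp hconv) i
  refine ⟨c, fun i => ?_, fun x t => ?_⟩
  · exact le_of_tendsto (hconv' i) (Filter.Eventually.of_forall fun k => hcs1 (φ k) i)
  · have hεconv : Tendsto (fun k => ε (φ k)) atTop (𝓝 0) := by
      have h1 : Tendsto ε atTop (𝓝 0) := tendsto_one_div_add_atTop_nhds_zero_nat
      exact h1.comp hφ.tendsto_atTop
    have hdconv : Tendsto (fun k => cs (φ k) ⬝ᵥ x) atTop (𝓝 (c ⬝ᵥ x)) := by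
      simp only [dotProduct]
      exact tendsto_finset_sum _ fun i _ => (hconv' i).mul tendsto_const_nhds
    have hFconv : Tendsto (fun k => x ⬝ᵥ B.mulVec x + ε (φ k) * (x ⬝ᵥ x)
        + 2 * (t * (cs (φ k) ⬝ᵥ x)) + t^2 * α) atTop
        (𝓝 (x ⬝ᵥ B.mulVec x + 2 * (t * (c ⬝ᵥ x)) + t^2 * α)) := by
      have h1 : Tendsto (fun k : ℕ => ε (φ k) * (x ⬝ᵥ x)) atTop (𝓝 0) := by
        simpa using hεconv.mul (tendsto_const_nhds (x := x ⬝ᵥ x) (f := atTop))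
      have h2 : Tendsto (fun k : ℕ => 2 * (t * (cs (φ k) ⬝ᵥ x))) atTop
          (𝓝 (2 * (t * (c ⬝ᵥ x)))) :=
        tendsto_const_nhds.mul (tendsto_const_nhds.mul hdconv)
      have h3 := (((tendsto_const_nhds (x := x ⬝ᵥ B.mulVec x) (f := (atTop : Filter ℕ))).add
        h1).add h2).add (tendsto_const_nhds (x := t^2 * α) (f := (atTop : Filter ℕ)))
      simpa using h3
    exact ge_of_tendsto' hFconv fun k => hcs3 (φ k) x t

private lemma quad_sum_expand {ι : Type*} [Fintype ι] (M : Matrix (ι ⊕ Unit) (ι ⊕ Unit) ℝ) (y : ι ⊕ Unit → ℝ) :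
    y ⬝ᵥ M.mulVec y =
      (fun i => y (Sum.inl i)) ⬝ᵥ (M.submatrix Sum.inl Sum.inl).mulVec (fun i => y (Sum.inl i))
      + y (Sum.inr ()) * ((fun j => M (Sum.inr ()) (Sum.inl j)) ⬝ᵥ fun i => y (Sum.inl i))
      + ((fun i => M (Sum.inl i) (Sum.inr ())) ⬝ᵥ fun i => y (Sum.inl i)) * y (Sum.inr ())
      + y (Sum.inr ()) * M (Sum.inr ()) (Sum.inr ()) * y (Sum.inr ()) := by
  simp only [dotProduct, mulVec, submatrix_apply, Fintype.sum_sum_type, Finset.univ_unique,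
    Finset.sum_singleton, mul_add, add_mul, Finset.sum_add_distrib, Finset.mul_sum,
    Finset.sum_mul]
  simp only [show (default : Unit) = () from rfl]
  ring_nf
  have hx : ∑ x : ι, y (Sum.inl x) * M (Sum.inl x) (Sum.inr ()) * y (Sum.inr ())
      = ∑ i : ι, M (Sum.inl i) (Sum.inr ()) * y (Sum.inl i) * y (Sum.inr ()) :=
    Finset.sum_congr rfl fun i _ => by ring
  congr 1
  exact Finset.sum_congr rfl fun i _ => by ring

private lemma dot_submatrix_equiv {ι κ : Type*} [Fintype ι] [Fintype κ]
    (A : Matrix ι ι ℝ) (e : κ ≃ ι) (x : κ → ℝ) :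
    x ⬝ᵥ (A.submatrix e e).mulVec x = (x ∘ e.symm) ⬝ᵥ A.mulVec (x ∘ e.symm) := by
  simp only [dotProduct, mulVec, submatrix_apply, Function.comp]
  rw [← Equiv.sum_comp e (fun i => x (e.symm i) * ∑ j, A i j * x (e.symm j))]
  refine Finset.sum_congr rfl fun a _ => ?_
  rw [Equiv.symm_apply_apply]
  congr 1
  rw [← Equiv.sum_comp e (fun j => A (e a) j * x (e.symm j))]
  refine Finset.sum_congr rfl fun b _ => ?_
  rw [Equiv.symm_apply_apply]


private lemma spn_sum {ι : Type*} [Fintype ι] [DecidableEq ι]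
    (M : Matrix (ι ⊕ Unit) (ι ⊕ Unit) ℝ) (hM : M.IsSymm)
    (hcop : Copositive M)
    (hpsd : (M.submatrix Sum.inl Sum.inl).PosSemidef) : IsSPN M := by
  set B := M.submatrix Sum.inl Sum.inl with hBdef
  set b : ι → ℝ := fun i => M (Sum.inl i) (Sum.inr ()) with hbdef
  set α : ℝ := M (Sum.inr ()) (Sum.inr ()) with hαdef
  have hBs : B.IsSymm := hM.submatrix _
  have hB : ∀ x : ι → ℝ, 0 ≤ x ⬝ᵥ B.mulVec x := fun x => by simpa using hpsd.dotProduct_mulVec_nonneg x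
  have hα : 0 ≤ α := by
    have hnn : ∀ a, 0 ≤ (Pi.single (Sum.inr () : ι ⊕ Unit) 1 : (ι ⊕ Unit) → ℝ) a := by
      intro a
      rcases eq_or_ne a (Sum.inr ()) with rfl | hne
      · simp
      · simp [Pi.single_apply, hne]
    have := hcop _ hnn
    simpa [mulVec_single, single_dotProduct] using this
  have hrow : (fun j => M (Sum.inr ()) (Sum.inl j)) = b := by
    funext j
    exact hM.apply (Sum.inl j) (Sum.inr ())
  have h : ∀ x : ι → ℝ, (∀ i, 0 ≤ x i) →
      0 ≤ x ⬝ᵥ B.mulVec x + 2 * (b ⬝ᵥ x) + α := by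
    intro x hx
    set y : ι ⊕ Unit → ℝ := Sum.elim x (fun _ => 1) with hy
    have hynn : ∀ a, 0 ≤ y a := by
      intro a
      cases a with
      | inl i => simpa [hy] using hx i
      | inr u => simp [hy]
    have hq := hcop y hynn
    rw [quad_sum_expand M y] at hq
    have e0 : (fun i => y (Sum.inl i)) = x := rfl
    have e1 : y (Sum.inr ()) = 1 := rfl
    rw [e0, e1, hrow] at hq
    have e2 : (fun i => M (Sum.inl i) (Sum.inr ())) = b := rfl
    rw [e2] at hq
    linarith
  obtain ⟨c, hc1, hc2⟩ := core B hBs hB b α hα h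
  set P : Matrix (ι ⊕ Unit) (ι ⊕ Unit) ℝ := Matrix.of (fun a a' =>
    match a, a' with
    | Sum.inl i, Sum.inl j => B i j
    | Sum.inl i, Sum.inr _ => c i
    | Sum.inr _, Sum.inl j => c j
    | Sum.inr _, Sum.inr _ => α) with hPdef
  have hPsym : P.IsSymm := by
    unfold Matrix.IsSymm
    ext a a'
    simp only [Matrix.transpose_apply]
    cases a with
    | inl i => cases a' with
      | inl j => exact hBs.apply i j
      | inr u => rfl
    | inr u => cases a' with
      | inl j => rfl
      | inr u' => rfl
  have hPpsd : P.PosSemidef := by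
    refine .of_dotProduct_mulVec_nonneg hPsym fun y => ?_
    have hyq : 0 ≤ y ⬝ᵥ P.mulVec y := by
      rw [quad_sum_expand P y]
      have e0 : P.submatrix Sum.inl Sum.inl = B := rfl
      have e1 : (fun j => P (Sum.inr ()) (Sum.inl j)) = c := rfl
      have e2 : (fun i => P (Sum.inl i) (Sum.inr ())) = c := rfl
      have e3 : P (Sum.inr ()) (Sum.inr ()) = α := rfl
      rw [e0, e1, e2, e3]
      have := hc2 (fun i => y (Sum.inl i)) (y (Sum.inr ()))
      nlinarith [this]
    simpa using hyq
  refine ⟨P, M - P, hPpsd, hM.sub hPsym, ?_, by rw [add_sub_cancel]⟩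
  intro a a'
  cases a with
  | inl i => cases a' with
    | inl j =>
      have : M (Sum.inl i) (Sum.inl j) = B i j := rfl
      simp [Matrix.sub_apply, this, hPdef]
    | inr u =>
      cases u
      have : P (Sum.inl i) (Sum.inr ()) = c i := rfl
      simp only [Matrix.sub_apply, this]
      have := hc1 i
      simp only [hbdef] at this
      linarith
  | inr u => cases u with
    | unit => cases a' with
      | inl j =>
        have h1 : P (Sum.inr ()) (Sum.inl j) = c j := rfl
        have h2 : M (Sum.inr ()) (Sum.inl j) = b j := congrFun hrow j
        simp only [Matrix.sub_apply, h1, h2]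
        have := hc1 j
        linarith
      | inr u' =>
        cases u'
        have : P (Sum.inr ()) (Sum.inr ()) = α := rfl
        simp [Matrix.sub_apply, this, hαdef]

/-- A copositive symmetric matrix of order `n ≥ 2` with a positive
semidefinite principal submatrix of order `n - 1` is SPN. -/
theorem copositive_of_psd_principal_submatrix_isSPN
    (n : ℕ) (hn : 2 ≤ n) (A : Matrix (Fin n) (Fin n) ℝ)
    (hA : A.IsSymm) (hcop : Copositive A)
    (hsub : ∃ f : Fin (n - 1) ↪ Fin n, (A.submatrix f f).PosSemidef) :
    IsSPN A := by
  obtain ⟨f, hpsd⟩ := hsub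
  -- find the missing index k
  have hcardlt : (Finset.univ.image f).card < n := by
    rw [Finset.card_image_of_injective _ f.injective, Finset.card_univ, Fintype.card_fin]
    omega
  have hcompl : ((Finset.univ.image f)ᶜ : Finset (Fin n)).Nonempty := by
    rw [← Finset.card_pos, Finset.card_compl]
    simp only [Fintype.card_fin]
    omega
  obtain ⟨k, hk⟩ := hcompl
  have hknot : ∀ i, f i ≠ k := by
    intro i hik
    rw [Finset.mem_compl] at hk
    exact hk (Finset.mem_image.mpr ⟨i, Finset.mem_univ i, hik⟩)
  set g : Fin (n - 1) ⊕ Unit → Fin n := Sum.elim f (fun _ => k) with hg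
  have hginj : Function.Injective g := by
    intro a a' hh
    cases a with
    | inl i => cases a' with
      | inl j =>
        have : f i = f j := by simpa [hg] using hh
        rw [f.injective this]
      | inr u => exact absurd (by simpa [hg] using hh) (hknot i)
    | inr u => cases a' with
      | inl j => exact absurd (by simpa [hg] using hh.symm) (hknot j)
      | inr u' => cases u; cases u'; rfl
  have hgbij : Function.Bijective g := by
    rw [Fintype.bijective_iff_injective_and_card]
    refine ⟨hginj, ?_⟩
    simp only [Fintype.card_sum, Fintype.card_fin, Fintype.card_unit]
    omega
  set e : Fin (n - 1) ⊕ Unit ≃ Fin n := Equiv.ofBijective g hgbij with he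
  set M : Matrix (Fin (n - 1) ⊕ Unit) (Fin (n - 1) ⊕ Unit) ℝ := A.submatrix e e with hM
  have hMsym : M.IsSymm := hA.submatrix _
  have hMcop : Copositive M := by
    intro y hy
    rw [hM, dot_submatrix_equiv A e y]
    exact hcop _ (fun i => hy (e.symm i))
  have hMsub : (M.submatrix Sum.inl Sum.inl).PosSemidef := by
    rw [hM, submatrix_submatrix]
    have : (⇑e ∘ Sum.inl : Fin (n-1) → Fin n) = f := by
      funext i; rfl
    rw [this]
    exact hpsd
  obtain ⟨P, N, hP, hNs, hNnn, hsum⟩ := spn_sum M hMsym hMcop hMsub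
  refine ⟨P.submatrix e.symm e.symm, N.submatrix e.symm e.symm,
    hP.submatrix _, hNs.submatrix _, fun i j => hNnn _ _, ?_⟩
  have hA2 : A = M.submatrix e.symm e.symm := by
    rw [hM, submatrix_submatrix, Equiv.self_comp_symm, submatrix_id_id]
  rw [hA2, hsum]
  ext i j
  simp [Matrix.submatrix_apply, Matrix.add_apply]
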